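/- In the 4×4 marriage market of Example 2, the matching μ_1 matching m1–w2, m2–w1, m3–w3, m4–w4 has exactly one blocking pair, namely (m2,w2), which is mutually optimal; satisfying it yields the matching μ_2 matching m2–w2, m3–w3, m4–w4 with m1 and w1 unmatched; and there exists a sequence of matchings μ_2, μ_3, …, μ_9, μ_10 with μ_10 = μ_2 and μ_2, …, μ_9 pairwise distinct such that for every i ∈ {2,…,9}, the matching μ_i is unstable, admits a unique mutually optimal blocking pair, and μ_{i+1} is obtained from μ_i by satisfying that unique mutually optimal blocking pair. Hence the deterministic process of satisfying the unique mutually optimal blocking pair at every step cycles forever and never reaches a stable matching. -/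

import Mathlib

namespace Marriage

/-- A marriage market: disjoint sets of men `M` and women `W`, each man `m` with a strict
(linear) preference order on `W ∪ {m}` (encoded as `Option W`, where `none` stands for
staying single, i.e. being matched to himself), and likewise for women. -/
structure Market (M W : Type*) where
  prefM : M → Option W → Option W → Prop
  prefW : W → Option M → Option M → Prop
  prefM_sto : ∀ m, IsStrictTotalOrder (Option W) (prefM m)
  prefW_sto : ∀ w, IsStrictTotalOrder (Option M) (prefW w)

/-- A matching: `f m = some w` iff `m` is matched to `w` iff `g w = some m`;
`f m = none` (resp. `g w = none`) means the player is unmatched (matched to themself). -/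
structure Matching (M W : Type*) where
  f : M → Option W
  g : W → Option M
  consistent : ∀ m w, f m = some w ↔ g w = some m

variable {M W : Type*}

/-- `(m, w)` is a blocking pair of `μ`. -/
def IsBlocking (E : Market M W) (μ : Matching M W) (m : M) (w : W) : Prop :=
  μ.f m ≠ some w ∧ E.prefM m (some w) (μ.f m) ∧ E.prefW w (some m) (μ.g w)

/-- `μ` is individually rational: no player strictly prefers being single to their match. -/
def IndivRational (E : Market M W) (μ : Matching M W) : Prop :=
  (∀ m, ¬ E.prefM m none (μ.f m)) ∧ (∀ w, ¬ E.prefW w none (μ.g w))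

/-- `μ` is stable: individually rational and without blocking pairs. -/
def IsStable (E : Market M W) (μ : Matching M W) : Prop :=
  IndivRational E μ ∧ ∀ m w, ¬ IsBlocking E μ m w

/-- `μ'` is obtained from `μ` by satisfying the pair `(m, w)`: `m` and `w` get matched to
each other, their former partners (if any) become unmatched, everyone else keeps their
partner. -/
def Satisfies (μ μ' : Matching M W) (m : M) (w : W) : Prop :=
  μ'.f m = some w ∧ μ'.g w = some m ∧
  (∀ m', m' ≠ m → μ.f m' = some w → μ'.f m' = none) ∧
  (∀ m', m' ≠ m → μ.f m' ≠ some w → μ'.f m' = μ.f m') ∧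
  (∀ w', w' ≠ w → μ.g w' = some m → μ'.g w' = none) ∧
  (∀ w', w' ≠ w → μ.g w' ≠ some m → μ'.g w' = μ.g w')

/-- A blocking pair `(m, w)` of `μ` that is optimal for the man `m`. -/
def OptimalForM (E : Market M W) (μ : Matching M W) (m : M) (w : W) : Prop :=
  IsBlocking E μ m w ∧
  ∀ w', IsBlocking E μ m w' → w' ≠ w → E.prefM m (some w) (some w')

/-- A blocking pair `(m, w)` of `μ` that is optimal for the woman `w`. -/
def OptimalForW (E : Market M W) (μ : Matching M W) (m : M) (w : W) : Prop :=
  IsBlocking E μ m w ∧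
  ∀ m', IsBlocking E μ m' w → m' ≠ m → E.prefW w (some m) (some m')

/-- A mutually optimal blocking pair of `μ`. -/
def MutuallyOptimal (E : Market M W) (μ : Matching M W) (m : M) (w : W) : Prop :=
  OptimalForM E μ m w ∧ OptimalForW E μ m w


/-- Rank (lower = better) on `Option (Fin n)` induced by a rank matrix, with being
unmatched (`none`) strictly worse than any partner. -/
def optRank {n : ℕ} (r : Fin n → Fin n → ℕ) (i : Fin n) : Option (Fin n) → ℕ
  | none => n
  | some j => r i j

/-- Build a market on `Fin n × Fin n` from rank matrices (lower rank = more preferred). -/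
def mkMarket {n : ℕ} (rM rW : Fin n → Fin n → ℕ)
    (hM : ∀ (i : Fin n) (a b : Option (Fin n)),
      optRank rM i a < optRank rM i b ∨ a = b ∨ optRank rM i b < optRank rM i a)
    (hW : ∀ (i : Fin n) (a b : Option (Fin n)),
      optRank rW i a < optRank rW i b ∨ a = b ∨ optRank rW i b < optRank rW i a) :
    Market (Fin n) (Fin n) where
  prefM m a b := optRank rM m a < optRank rM m b
  prefW w a b := optRank rW w a < optRank rW w b
  prefM_sto m :=
    { trichotomous := fun a b h1 h2 => ((hM m a b).resolve_left h1).resolve_right h2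
      irrefl := fun _ => lt_irrefl _
      trans := fun _ _ _ h1 h2 => lt_trans h1 h2 }
  prefW_sto w :=
    { trichotomous := fun a b h1 h2 => ((hW w a b).resolve_left h1).resolve_right h2
      irrefl := fun _ => lt_irrefl _
      trans := fun _ _ _ h1 h2 => lt_trans h1 h2 }

/-- Rank matrix for the men of Example 2. -/
def Ex2M : Fin 4 → Fin 4 → ℕ := ![![3,0,2,1], ![2,1,3,0], ![0,2,1,3], ![1,3,0,2]]

/-- Rank matrix for the women of Example 2. -/
def Ex2W : Fin 4 → Fin 4 → ℕ := ![![0,1,3,2], ![3,2,1,0], ![1,0,2,3], ![2,3,0,1]]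

/-- The 4×4 marriage market of Example 2. -/
def Ex2 : Market (Fin 4) (Fin 4) := mkMarket Ex2M Ex2W (by decide) (by decide)

/-- The matching μ₁ of Example 2: m1–w2, m2–w1, m3–w3, m4–w4. -/
def Ex2mu1 : Matching (Fin 4) (Fin 4) :=
  ⟨![some 1, some 0, some 2, some 3], ![some 1, some 0, some 2, some 3], by decide⟩

/-- The matching μ₂ of Example 2: m2–w2, m3–w3, m4–w4, with m1 and w1 unmatched. -/
def Ex2mu2 : Matching (Fin 4) (Fin 4) :=
  ⟨![none, some 1, some 2, some 3], ![none, some 1, some 2, some 3], by decide⟩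


def Ex2mat1 : Matching (Fin 4) (Fin 4) := ⟨![some 2, some 1, none, some 3], ![none, some 1, some 0, some 3], by decide⟩
def Ex2mat2 : Matching (Fin 4) (Fin 4) := ⟨![some 2, some 1, none, some 0], ![some 3, some 1, some 0, none], by decide⟩
def Ex2mat3 : Matching (Fin 4) (Fin 4) := ⟨![some 2, none, some 1, some 0], ![some 3, some 2, some 0, none], by decide⟩
def Ex2mat4 : Matching (Fin 4) (Fin 4) := ⟨![some 3, none, some 1, some 0], ![some 3, some 2, none, some 0], by decide⟩
def Ex2mat5 : Matching (Fin 4) (Fin 4) := ⟨![some 3, some 0, some 1, none], ![some 1, some 2, none, some 0], by decide⟩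
def Ex2mat6 : Matching (Fin 4) (Fin 4) := ⟨![some 3, some 0, some 2, none], ![some 1, none, some 2, some 0], by decide⟩
def Ex2mat7 : Matching (Fin 4) (Fin 4) := ⟨![none, some 0, some 2, some 3], ![some 1, none, some 2, some 3], by decide⟩

/-- The cyclic sequence μ₂, …, μ₉, μ₁₀ = μ₂. -/
def Ex2seq : Fin 9 → Matching (Fin 4) (Fin 4) :=
  ![Ex2mu2, Ex2mat1, Ex2mat2, Ex2mat3, Ex2mat4, Ex2mat5, Ex2mat6, Ex2mat7, Ex2mu2]

/-- Decidability of the men's preference relation of Example 2. -/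
instance (m : Fin 4) (a b : Option (Fin 4)) : Decidable (Ex2.prefM m a b) :=
  inferInstanceAs (Decidable (optRank Ex2M m a < optRank Ex2M m b))

/-- Decidability of the women's preference relation of Example 2. -/
instance (w : Fin 4) (a b : Option (Fin 4)) : Decidable (Ex2.prefW w a b) :=
  inferInstanceAs (Decidable (optRank Ex2W w a < optRank Ex2W w b))

set_option synthInstance.maxSize 1000
set_option maxHeartbeats 1000000

/-- In the 4×4 market of Example 2: `μ₁` (m1–w2, m2–w1, m3–w3, m4–w4) has exactly one
blocking pair, namely (m2, w2), which is mutually optimal; satisfying it yields `μ₂`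
(m2–w2, m3–w3, m4–w4, with m1 and w1 unmatched); and there is a cycle
μ₂, μ₃, …, μ₉, μ₁₀ = μ₂ of pairwise distinct matchings μ₂, …, μ₉ in which every matching
is unstable, admits a unique mutually optimal blocking pair, and the next matching is
obtained by satisfying that unique mutually optimal blocking pair. -/
theorem example2_cycle_of_unique_mutually_optimal_blocking_pairs :
    (∀ m w, IsBlocking Ex2 Ex2mu1 m w ↔ (m = 1 ∧ w = 1)) ∧
    MutuallyOptimal Ex2 Ex2mu1 1 1 ∧
    Satisfies Ex2mu1 Ex2mu2 1 1 ∧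
    ∃ seq : Fin 9 → Matching (Fin 4) (Fin 4),
      seq 0 = Ex2mu2 ∧ seq (Fin.last 8) = Ex2mu2 ∧
      Function.Injective (fun i : Fin 8 => seq i.castSucc) ∧
      ∀ i : Fin 8,
        ¬ IsStable Ex2 (seq i.castSucc) ∧
        (∃! p : Fin 4 × Fin 4, MutuallyOptimal Ex2 (seq i.castSucc) p.1 p.2) ∧
        (∀ m w, MutuallyOptimal Ex2 (seq i.castSucc) m w →
          Satisfies (seq i.castSucc) (seq i.succ) m w) := by
  refine ⟨?_, ?_, ?_, Ex2seq, rfl, rfl, ?_, ?_⟩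
  · unfold IsBlocking Ex2 mkMarket
    decide
  · unfold MutuallyOptimal OptimalForM OptimalForW IsBlocking Ex2 mkMarket
    decide
  · unfold Satisfies
    decide
  · have hf : Function.Injective (fun i : Fin 8 => (Ex2seq i.castSucc).f) := by decide
    intro a b h
    exact hf (congrArg Matching.f h)
  · unfold IsStable IndivRational MutuallyOptimal OptimalForM OptimalForW IsBlocking
      Satisfies Ex2 mkMarket ExistsUnique
    decide

end Marriage
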